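/- For quadratic data (V,R) and (W,S) with R ⊆ V⊗V and S ⊆ W⊗W, the quadratic associative algebras satisfy T(V)/(R) ⊗ T(W)/(S) ≅ T(V⊕W)/(R ⊕ [V,W]₋ ⊕ S), where [V,W]₋ ⊆ (V⊕W)⊗(V⊕W) is spanned by the elements v⊗w - w⊗v for v∈V, w∈W. -/

import Mathlib

open TensorProduct

variable (K : Type*) [Field K]

/-- The canonical linear map `V ⊗ V → T(V)`, `x ⊗ y ↦ x · y`. -/
noncomputable def tensorSquareToTensorAlgebra (V : Type*) [AddCommGroup V] [Module K V] :
    V ⊗[K] V →ₗ[K] TensorAlgebra K V :=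
  (LinearMap.mul' K (TensorAlgebra K V)).comp
    (TensorProduct.map (TensorAlgebra.ι K) (TensorAlgebra.ι K))

/-- The relation killing (the image in `T(V)` of) a subspace `W ⊆ V ⊗ V`; its `RingQuot` is
the quadratic algebra `T(V)/(W)`. -/
def quadRel (V : Type*) [AddCommGroup V] [Module K V] (W : Submodule K (V ⊗[K] V)) :
    TensorAlgebra K V → TensorAlgebra K V → Prop :=
  fun a b => b = 0 ∧ a ∈ Submodule.map (tensorSquareToTensorAlgebra K V) W

/-- The quadratic associative algebra `T(V)/(R)`. -/
noncomputable abbrev QuadAlg (V : Type*) [AddCommGroup V] [Module K V]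
    (R : Submodule K (V ⊗[K] V)) :=
  RingQuot (quadRel K V R)

/-- The subspace `[V, W]₋ ⊆ (V ⊕ W) ⊗ (V ⊕ W)` spanned by the elements
`v ⊗ w - w ⊗ v` for `v ∈ V`, `w ∈ W`. -/
noncomputable def commMinusSpan (V W : Type*) [AddCommGroup V] [Module K V]
    [AddCommGroup W] [Module K W] : Submodule K ((V × W) ⊗[K] (V × W)) :=
  Submodule.span K {z | ∃ (v : V) (w : W),
    z = (LinearMap.inl K V W v) ⊗ₜ[K] (LinearMap.inr K V W w)
      - (LinearMap.inr K V W w) ⊗ₜ[K] (LinearMap.inl K V W v)}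

section Aux
variable {K} {V : Type*} [AddCommGroup V] [Module K V]

@[simp] lemma tsq_tmul (x y : V) :
    tensorSquareToTensorAlgebra K V (x ⊗ₜ[K] y) = TensorAlgebra.ι K x * TensorAlgebra.ι K y := by
  simp [tensorSquareToTensorAlgebra]

lemma mk_tsq_eq_zero (R : Submodule K (V ⊗[K] V)) {x : V ⊗[K] V} (hx : x ∈ R) :
    RingQuot.mkAlgHom K (quadRel K V R) (tensorSquareToTensorAlgebra K V x) = 0 := by
  have := RingQuot.mkAlgHom_rel K (s := quadRel K V R)
    (x := tensorSquareToTensorAlgebra K V x) (y := 0) ⟨rfl, ⟨x, hx, rfl⟩⟩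
  simpa using this

noncomputable def quadLift (R : Submodule K (V ⊗[K] V)) {Z : Type*} [Semiring Z] [Algebra K Z]
    (φ : V →ₗ[K] Z)
    (h : ∀ x ∈ R, LinearMap.mul' K Z (TensorProduct.map φ φ x) = 0) :
    QuadAlg K V R →ₐ[K] Z :=
  RingQuot.liftAlgHom K ⟨TensorAlgebra.lift K φ, by
    rintro a b ⟨rfl, x, hx, rfl⟩
    have key : (TensorAlgebra.lift K φ).toLinearMap ∘ₗ tensorSquareToTensorAlgebra K V
        = LinearMap.mul' K Z ∘ₗ TensorProduct.map φ φ := by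
      apply TensorProduct.ext'
      intro v v'
      simp [tensorSquareToTensorAlgebra]
    have := LinearMap.congr_fun key x
    simp only [LinearMap.comp_apply, AlgHom.toLinearMap_apply] at this
    rw [this, h x hx, map_zero]⟩

@[simp] lemma quadLift_mk_ι (R : Submodule K (V ⊗[K] V)) {Z : Type*} [Semiring Z] [Algebra K Z]
    (φ : V →ₗ[K] Z) (h) (v : V) :
    quadLift R φ h (RingQuot.mkAlgHom K (quadRel K V R) (TensorAlgebra.ι K v)) = φ v := by
  simp [quadLift, RingQuot.liftAlgHom_mkAlgHom_apply]

lemma quadAlg_hom_ext {R : Submodule K (V ⊗[K] V)} {Z : Type*} [Semiring Z] [Algebra K Z]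
    {f g : QuadAlg K V R →ₐ[K] Z}
    (h : ∀ v, f (RingQuot.mkAlgHom K (quadRel K V R) (TensorAlgebra.ι K v))
      = g (RingQuot.mkAlgHom K (quadRel K V R) (TensorAlgebra.ι K v))) : f = g := by
  apply RingQuot.ringQuot_ext'
  apply TensorAlgebra.hom_ext
  ext v
  simpa using h v

lemma quad_commute {R : Submodule K (V ⊗[K] V)} {Z : Type*} [Semiring Z] [Algebra K Z]
    (f : QuadAlg K V R →ₐ[K] Z) (c : Z)
    (h : ∀ v, Commute (f (RingQuot.mkAlgHom K (quadRel K V R) (TensorAlgebra.ι K v))) c) :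
    ∀ x, Commute (f x) c := by
  intro x
  obtain ⟨t, rfl⟩ := RingQuot.mkAlgHom_surjective K _ x
  induction t using TensorAlgebra.induction with
  | algebraMap r =>
    rw [AlgHom.commutes, AlgHom.commutes]
    exact Algebra.commutes r c
  | ι v => exact h v
  | mul a b ha hb => rw [map_mul, map_mul]; exact ha.mul_left hb
  | add a b ha hb => rw [map_add, map_add]; exact ha.add_left hb

end Aux

section Main
variable {K} {V W : Type*} [AddCommGroup V] [Module K V] [AddCommGroup W] [Module K W]
  (R : Submodule K (V ⊗[K] V)) (S : Submodule K (W ⊗[K] W))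

noncomputable abbrev bigT : Submodule K ((V × W) ⊗[K] (V × W)) :=
  Submodule.map (TensorProduct.map (LinearMap.inl K V W) (LinearMap.inl K V W)) R
    ⊔ commMinusSpan K V W
    ⊔ Submodule.map (TensorProduct.map (LinearMap.inr K V W) (LinearMap.inr K V W)) S

local notation "mkC" => RingQuot.mkAlgHom K (quadRel K (V × W) (bigT R S))
local notation "mkA" => RingQuot.mkAlgHom K (quadRel K V R)
local notation "mkB" => RingQuot.mkAlgHom K (quadRel K W S)

noncomputable def fwdA : QuadAlg K V R →ₐ[K] QuadAlg K (V × W) (bigT R S) :=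
  quadLift R ((mkC).toLinearMap ∘ₗ (TensorAlgebra.ι K) ∘ₗ LinearMap.inl K V W) (by
    intro x hx
    have key : LinearMap.mul' K (QuadAlg K (V × W) (bigT R S)) ∘ₗ
        TensorProduct.map ((mkC).toLinearMap ∘ₗ (TensorAlgebra.ι K) ∘ₗ LinearMap.inl K V W)
          ((mkC).toLinearMap ∘ₗ (TensorAlgebra.ι K) ∘ₗ LinearMap.inl K V W)
        = (mkC).toLinearMap ∘ₗ tensorSquareToTensorAlgebra K (V × W) ∘ₗ
          TensorProduct.map (LinearMap.inl K V W) (LinearMap.inl K V W) := by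
      apply TensorProduct.ext'
      intro v v'
      simp
    have := LinearMap.congr_fun key x
    simp only [LinearMap.comp_apply] at this
    rw [this]
    exact mk_tsq_eq_zero _ (Submodule.mem_sup_left (Submodule.mem_sup_left ⟨x, hx, rfl⟩)))

noncomputable def fwdB : QuadAlg K W S →ₐ[K] QuadAlg K (V × W) (bigT R S) :=
  quadLift S ((mkC).toLinearMap ∘ₗ (TensorAlgebra.ι K) ∘ₗ LinearMap.inr K V W) (by
    intro x hx
    have key : LinearMap.mul' K (QuadAlg K (V × W) (bigT R S)) ∘ₗ
        TensorProduct.map ((mkC).toLinearMap ∘ₗ (TensorAlgebra.ι K) ∘ₗ LinearMap.inr K V W)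
          ((mkC).toLinearMap ∘ₗ (TensorAlgebra.ι K) ∘ₗ LinearMap.inr K V W)
        = (mkC).toLinearMap ∘ₗ tensorSquareToTensorAlgebra K (V × W) ∘ₗ
          TensorProduct.map (LinearMap.inr K V W) (LinearMap.inr K V W) := by
      apply TensorProduct.ext'
      intro v v'
      simp
    have := LinearMap.congr_fun key x
    simp only [LinearMap.comp_apply] at this
    rw [this]
    exact mk_tsq_eq_zero _ (Submodule.mem_sup_right ⟨x, hx, rfl⟩))

@[simp] lemma fwdA_mk_ι (v : V) :
    fwdA R S (mkA (TensorAlgebra.ι K v)) = mkC (TensorAlgebra.ι K (v, 0)) := by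
  simp [fwdA]

@[simp] lemma fwdB_mk_ι (w : W) :
    fwdB R S (mkB (TensorAlgebra.ι K w)) = mkC (TensorAlgebra.ι K (0, w)) := by
  simp [fwdB]

lemma fwd_commute (a : QuadAlg K V R) (b : QuadAlg K W S) :
    Commute (fwdA R S a) (fwdB R S b) := by
  apply quad_commute (fwdA R S) (fwdB R S b)
  intro v
  refine ((quad_commute (fwdB R S) (fwdA R S (mkA (TensorAlgebra.ι K v))) ?_) b).symm
  intro w
  rw [fwdA_mk_ι, fwdB_mk_ι]
  have hz : (LinearMap.inl K V W v) ⊗ₜ[K] (LinearMap.inr K V W w)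
      - (LinearMap.inr K V W w) ⊗ₜ[K] (LinearMap.inl K V W v) ∈ bigT R S :=
    Submodule.mem_sup_left (Submodule.mem_sup_right (Submodule.subset_span ⟨v, w, rfl⟩))
  have h0 := mk_tsq_eq_zero _ hz
  rw [map_sub, tsq_tmul, tsq_tmul, map_sub, map_mul, map_mul, sub_eq_zero] at h0
  simp at h0; exact h0.symm

noncomputable def fwd : (QuadAlg K V R ⊗[K] QuadAlg K W S) →ₐ[K] QuadAlg K (V × W) (bigT R S) :=
  Algebra.TensorProduct.lift (fwdA R S) (fwdB R S) (fwd_commute R S)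

noncomputable def bwdGen : (V × W) →ₗ[K] (QuadAlg K V R ⊗[K] QuadAlg K W S) :=
  (Algebra.TensorProduct.includeLeft (R := K) (S := K)).toLinearMap ∘ₗ
      (mkA).toLinearMap ∘ₗ TensorAlgebra.ι K ∘ₗ LinearMap.fst K V W
  + (Algebra.TensorProduct.includeRight (R := K)).toLinearMap ∘ₗ
      (mkB).toLinearMap ∘ₗ TensorAlgebra.ι K ∘ₗ LinearMap.snd K V W

@[simp] lemma bwdGen_apply (v : V) (w : W) :
    bwdGen R S (v, w)
      = mkA (TensorAlgebra.ι K v) ⊗ₜ[K] 1 + 1 ⊗ₜ[K] mkB (TensorAlgebra.ι K w) := by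
  simp [bwdGen]

set_option maxHeartbeats 1000000 in
noncomputable def bwd : QuadAlg K (V × W) (bigT R S) →ₐ[K] (QuadAlg K V R ⊗[K] QuadAlg K W S) :=
  quadLift (bigT R S) (bwdGen R S) (by
    intro x hx
    refine (?_ : bigT R S ≤ LinearMap.ker (LinearMap.mul' K (QuadAlg K V R ⊗[K] QuadAlg K W S) ∘ₗ
      TensorProduct.map (bwdGen R S) (bwdGen R S))) hx
    refine sup_le (sup_le ?_ ?_) ?_
    · rintro _ ⟨r, hr, rfl⟩
      have key : (LinearMap.mul' K (QuadAlg K V R ⊗[K] QuadAlg K W S) ∘ₗ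
            TensorProduct.map (bwdGen R S) (bwdGen R S)) ∘ₗ
            TensorProduct.map (LinearMap.inl K V W) (LinearMap.inl K V W)
          = (Algebra.TensorProduct.includeLeft (R := K) (S := K)).toLinearMap ∘ₗ
            (mkA).toLinearMap ∘ₗ tensorSquareToTensorAlgebra K V := by
        apply TensorProduct.ext'
        intro v v'
        simp only [LinearMap.comp_apply, TensorProduct.map_tmul, LinearMap.mul'_apply,
          LinearMap.inl_apply, bwdGen_apply, map_zero, TensorProduct.tmul_zero, add_zero,
          Algebra.TensorProduct.tmul_mul_tmul, mul_one, AlgHom.toLinearMap_apply, tsq_tmul,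
          map_mul, Algebra.TensorProduct.includeLeft_apply]
      have := LinearMap.congr_fun key r
      simp only [LinearMap.comp_apply, AlgHom.toLinearMap_apply] at this
      simp only [LinearMap.mem_ker, LinearMap.comp_apply, this, mk_tsq_eq_zero R hr, map_zero]
    · rw [commMinusSpan, Submodule.span_le]
      rintro _ ⟨v, w, rfl⟩
      simp only [SetLike.mem_coe, LinearMap.mem_ker, map_sub, LinearMap.comp_apply,
        TensorProduct.map_tmul, LinearMap.mul'_apply, LinearMap.inl_apply, LinearMap.inr_apply,
        bwdGen_apply, map_zero, TensorProduct.tmul_zero, TensorProduct.zero_tmul, add_zero,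
        zero_add, Algebra.TensorProduct.tmul_mul_tmul, mul_one, one_mul, sub_self]
    · rintro _ ⟨s, hs, rfl⟩
      have key : (LinearMap.mul' K (QuadAlg K V R ⊗[K] QuadAlg K W S) ∘ₗ
            TensorProduct.map (bwdGen R S) (bwdGen R S)) ∘ₗ
            TensorProduct.map (LinearMap.inr K V W) (LinearMap.inr K V W)
          = (Algebra.TensorProduct.includeRight (R := K)).toLinearMap ∘ₗ
            (mkB).toLinearMap ∘ₗ tensorSquareToTensorAlgebra K W := by
        apply TensorProduct.ext'
        intro v v'
        simp only [LinearMap.comp_apply, TensorProduct.map_tmul, LinearMap.mul'_apply,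
          LinearMap.inr_apply, bwdGen_apply, map_zero, TensorProduct.zero_tmul, zero_add,
          Algebra.TensorProduct.tmul_mul_tmul, mul_one, one_mul, AlgHom.toLinearMap_apply,
          tsq_tmul, map_mul, Algebra.TensorProduct.includeRight_apply]
      have := LinearMap.congr_fun key s
      simp only [LinearMap.comp_apply, AlgHom.toLinearMap_apply] at this
      simp only [LinearMap.mem_ker, LinearMap.comp_apply, this, mk_tsq_eq_zero S hs, map_zero])

@[simp] lemma bwd_mk_ι (p : V × W) :
    bwd R S (mkC (TensorAlgebra.ι K p))
      = mkA (TensorAlgebra.ι K p.1) ⊗ₜ[K] 1 + 1 ⊗ₜ[K] mkB (TensorAlgebra.ι K p.2) := by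
  rw [bwd]; refine (quadLift_mk_ι _ _ _ p).trans ?_
  exact bwdGen_apply R S p.1 p.2

set_option synthInstance.maxHeartbeats 400000 in
lemma fwd_bwd : (fwd R S).comp (bwd R S) = AlgHom.id K _ := by
  apply quadAlg_hom_ext
  intro p
  rw [AlgHom.comp_apply, AlgHom.id_apply, bwd_mk_ι, map_add]
  rw [show (fwd R S) (mkA (TensorAlgebra.ι K p.1) ⊗ₜ[K] 1)
      = fwdA R S (mkA (TensorAlgebra.ι K p.1)) * fwdB R S 1 from
    Algebra.TensorProduct.lift_tmul _ _ _ _ _]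
  rw [show (fwd R S) ((1 : QuadAlg K V R) ⊗ₜ[K] mkB (TensorAlgebra.ι K p.2))
      = fwdA R S 1 * fwdB R S (mkB (TensorAlgebra.ι K p.2)) from
    Algebra.TensorProduct.lift_tmul _ _ _ _ _]
  rw [map_one, map_one, mul_one, one_mul, fwdA_mk_ι, fwdB_mk_ι, ← map_add, ← map_add]
  congr 1
  exact congrArg (TensorAlgebra.ι K) (by simp)

lemma bwd_fwd : (bwd R S).comp (fwd R S) = AlgHom.id K _ := by
  apply Algebra.TensorProduct.ext
  · apply quadAlg_hom_ext
    intro v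
    rw [AlgHom.comp_apply, AlgHom.comp_apply, AlgHom.comp_apply]
    rw [show (fwd R S) ((Algebra.TensorProduct.includeLeft (R := K) (S := K))
        (mkA (TensorAlgebra.ι K v))) = fwdA R S (mkA (TensorAlgebra.ι K v)) * fwdB R S 1 from
      Algebra.TensorProduct.lift_tmul _ _ _ _ _]
    rw [map_one, mul_one, fwdA_mk_ι, bwd_mk_ι]
    simp
  · apply quadAlg_hom_ext
    intro w
    simp only [AlgHom.restrictScalars_apply, AlgHom.comp_apply]
    rw [show (fwd R S) ((Algebra.TensorProduct.includeRight (R := K))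
        (mkB (TensorAlgebra.ι K w))) = fwdA R S 1 * fwdB R S (mkB (TensorAlgebra.ι K w)) from
      Algebra.TensorProduct.lift_tmul _ _ _ _ _]
    rw [map_one, one_mul, fwdB_mk_ι, bwd_mk_ι]
    simp

end Main

/-- For quadratic data `(V, R)` and `(W, S)`, the quadratic associative
algebras satisfy `T(V)/(R) ⊗ T(W)/(S) ≅ T(V ⊕ W)/(R ⊕ [V,W]₋ ⊕ S)`, where
`[V,W]₋ ⊆ (V ⊕ W)⊗(V ⊕ W)` is spanned by the elements `v ⊗ w - w ⊗ v` for `v ∈ V`,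
`w ∈ W`, and the tensor product of algebras carries the componentwise product. -/
theorem quadAlg_tensor_iso
    (V W : Type*) [AddCommGroup V] [Module K V] [AddCommGroup W] [Module K W]
    (R : Submodule K (V ⊗[K] V)) (S : Submodule K (W ⊗[K] W)) :
    Nonempty ((QuadAlg K V R ⊗[K] QuadAlg K W S)
      ≃ₐ[K] QuadAlg K (V × W)
        (Submodule.map (TensorProduct.map (LinearMap.inl K V W) (LinearMap.inl K V W)) R
          ⊔ commMinusSpan K V W
          ⊔ Submodule.map (TensorProduct.map (LinearMap.inr K V W) (LinearMap.inr K V W)) S)) :=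
  ⟨AlgEquiv.ofAlgHom (fwd R S) (bwd R S) (fwd_bwd R S) (bwd_fwd R S)⟩
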